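/- Let T₁, …, T_N be n×n complex matrices and let T = [T₁ T₂ ⋯ T_N] be the n×(Nn) row block matrix. Then the operator norm of T is at most 1 if and only if there exist n×n contractions Γ₁, …, Γ_N such that T₁ = Γ₁ and, for each k with 2 ≤ k ≤ N, T_k = D_{Γ₁ᴴ} · D_{Γ₂ᴴ} ⋯ D_{Γ_{k−1}ᴴ} · Γ_k, where the product of defect operators is taken in the indicated order and D_{Γⱼᴴ} = (I − ΓⱼΓⱼᴴ)^{1/2}. -/

import Mathlib

open scoped Matrix Matrix.Norms.L2Operator ComplexOrder

/-- The unique positive semidefinite square root of a matrix, extended by `0` to matrices that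
are not positive semidefinite. -/
noncomputable def psdSqrt {m : ℕ} (A : Matrix (Fin m) (Fin m) ℂ) : Matrix (Fin m) (Fin m) ℂ :=
  letI := Classical.dec A.PosSemidef
  if h : A.PosSemidef then
    h.1.eigenvectorUnitary.1 * Matrix.diagonal ((↑) ∘ Real.sqrt ∘ h.1.eigenvalues) *
      (star h.1.eigenvectorUnitary : Matrix (Fin m) (Fin m) ℂ) else 0

noncomputable def Matrix.PosSemidef.sqrt {m : ℕ} {A : Matrix (Fin m) (Fin m) ℂ} (h : A.PosSemidef) :
    Matrix (Fin m) (Fin m) ℂ :=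
  h.1.eigenvectorUnitary.1 * Matrix.diagonal ((↑) ∘ Real.sqrt ∘ h.1.eigenvalues) *
    (star h.1.eigenvectorUnitary : Matrix (Fin m) (Fin m) ℂ)

lemma Matrix.PosSemidef.posSemidef_sqrt {m : ℕ} {A : Matrix (Fin m) (Fin m) ℂ}
    (h : A.PosSemidef) : h.sqrt.PosSemidef := by
  unfold Matrix.PosSemidef.sqrt
  rw [Matrix.star_eq_conjTranspose]
  refine (Matrix.PosSemidef.diagonal ?_).mul_mul_conjTranspose_same _
  intro i
  simp only [Pi.zero_apply, Function.comp_apply, Complex.zero_le_real]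
  exact Real.sqrt_nonneg _

lemma Matrix.PosSemidef.sqrt_mul_self {m : ℕ} {A : Matrix (Fin m) (Fin m) ℂ}
    (h : A.PosSemidef) : h.sqrt * h.sqrt = A := by
  unfold Matrix.PosSemidef.sqrt
  have hs := h.1.spectral_theorem
  simp only [Unitary.conjStarAlgAut_apply, Unitary.coe_star] at hs
  refine Eq.trans ?_ hs.symm
  have hU : star (h.1.eigenvectorUnitary : Matrix (Fin m) (Fin m) ℂ) *
      (h.1.eigenvectorUnitary : Matrix (Fin m) (Fin m) ℂ) = 1 :=
    Unitary.star_mul_self_of_mem h.1.eigenvectorUnitary.2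
  simp only [Matrix.mul_assoc]
  rw [← Matrix.mul_assoc _ (h.1.eigenvectorUnitary : Matrix (Fin m) (Fin m) ℂ), hU, Matrix.one_mul,
    ← Matrix.mul_assoc (Matrix.diagonal _) (Matrix.diagonal _), Matrix.diagonal_mul_diagonal]
  congr 2
  congr 1
  funext i
  simp only [Function.comp_apply]
  rw [← Complex.ofReal_mul, Real.mul_self_sqrt (h.eigenvalues_nonneg i)]
  rfl


section Aux

lemma dp_star_self {p : Type*} [Fintype p] (w : p → ℂ) :
    dotProduct (star w) w = ((‖(WithLp.equiv 2 (p → ℂ)).symm w‖ : ℝ) : ℂ)^2 := by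
  have := inner_self_eq_norm_sq_to_K (𝕜 := ℂ) ((WithLp.equiv 2 (p → ℂ)).symm w)
  rw [EuclideanSpace.inner_eq_star_dotProduct, dotProduct_comm] at this
  exact this

lemma quad_form_eq {m p : Type*} [Fintype m] [Fintype p] [DecidableEq m]
    (A : Matrix m p ℂ) (x : m → ℂ) :
    dotProduct (star x) ((1 - A * Aᴴ) *ᵥ x) =
      ((‖(WithLp.equiv 2 (m → ℂ)).symm x‖ : ℝ)^2
        - (‖(WithLp.equiv 2 (p → ℂ)).symm (Aᴴ *ᵥ x)‖ : ℝ)^2 : ℝ) := by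
  have h1 : (star x) ⬝ᵥ ((A * Aᴴ) *ᵥ x) = (star (Aᴴ *ᵥ x)) ⬝ᵥ (Aᴴ *ᵥ x) := by
    rw [← Matrix.mulVec_mulVec, Matrix.dotProduct_mulVec, Matrix.star_mulVec,
      Matrix.conjTranspose_conjTranspose]
  rw [Matrix.sub_mulVec, dotProduct_sub, Matrix.one_mulVec, h1, dp_star_self, dp_star_self]
  push_cast
  ring

lemma norm_le_one_iff_psd {m p : Type*} [Fintype m] [Fintype p] [DecidableEq m] [DecidableEq p]
    (A : Matrix m p ℂ) : ‖A‖ ≤ 1 ↔ (1 - A * Aᴴ).PosSemidef := by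
  have herm : (1 - A * Aᴴ).IsHermitian := by
    apply Matrix.IsHermitian.sub Matrix.isHermitian_one
    exact Matrix.isHermitian_mul_conjTranspose_self A
  have hAle : ‖A‖ = ‖Aᴴ‖ := (Matrix.l2_opNorm_conjTranspose A).symm
  have key : ∀ x : m → ℂ,
      (0 ≤ dotProduct (star x) ((1 - A * Aᴴ) *ᵥ x)) ↔
      ‖(WithLp.equiv 2 (p → ℂ)).symm (Aᴴ *ᵥ x)‖ ≤ ‖(WithLp.equiv 2 (m → ℂ)).symm x‖ := by
    intro x
    rw [quad_form_eq]
    rw [show ((0:ℂ) = ((0:ℝ):ℂ)) from rfl, Complex.real_le_real]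
    constructor
    · intro h
      nlinarith [norm_nonneg ((WithLp.equiv 2 (p → ℂ)).symm (Aᴴ *ᵥ x)),
        norm_nonneg ((WithLp.equiv 2 (m → ℂ)).symm x)]
    · intro h
      nlinarith [norm_nonneg ((WithLp.equiv 2 (p → ℂ)).symm (Aᴴ *ᵥ x))]
  constructor
  · intro hA
    refine Matrix.PosSemidef.of_dotProduct_mulVec_nonneg herm fun x => (key x).2 ?_
    calc ‖(WithLp.equiv 2 (p → ℂ)).symm (Aᴴ *ᵥ x)‖
        ≤ ‖Aᴴ‖ * ‖(WithLp.equiv 2 (m → ℂ)).symm x‖ := by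
          exact Matrix.l2_opNorm_mulVec Aᴴ ((WithLp.equiv 2 (m → ℂ)).symm x)
      _ ≤ 1 * ‖(WithLp.equiv 2 (m → ℂ)).symm x‖ := by
          apply mul_le_mul_of_nonneg_right _ (norm_nonneg _)
          rwa [← hAle]
      _ = _ := one_mul _
  · intro hpsd
    rw [hAle, Matrix.l2_opNorm_def]
    apply ContinuousLinearMap.opNorm_le_bound _ zero_le_one
    intro x
    rw [one_mul]
    have := (key ((WithLp.equiv 2 (m → ℂ)) x)).1 (hpsd.dotProduct_mulVec_nonneg _)
    exact this


lemma exists_pseudoInv {n : Type*} [Fintype n] [DecidableEq n] {P : Matrix n n ℂ}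
    (hP : P.PosSemidef) :
    ∃ Pi Q : Matrix n n ℂ, Piᴴ = Pi ∧ Qᴴ = Q ∧ P * Pi = Q ∧ Pi * P = Q ∧ Q * P = P ∧
      Q * Q = Q ∧ (1 - Q).PosSemidef := by
  set U : Matrix n n ℂ := (hP.1.eigenvectorUnitary : Matrix n n ℂ) with hU
  have hUU : U * Uᴴ = 1 := Matrix.mem_unitaryGroup_iff.mp hP.1.eigenvectorUnitary.2
  have hU'U : Uᴴ * U = 1 := Matrix.mem_unitaryGroup_iff'.mp hP.1.eigenvectorUnitary.2
  set d : n → ℝ := hP.1.eigenvalues with hd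
  set f : n → ℂ := fun i => ((d i : ℝ) : ℂ) with hf
  set g : n → ℂ := fun i => (((d i)⁻¹ : ℝ) : ℂ) with hg
  set e : n → ℂ := fun i => if d i = 0 then 0 else 1 with he
  have spec : P = U * Matrix.diagonal f * Uᴴ := by
    have := hP.1.spectral_theorem
    simp only [Unitary.conjStarAlgAut_apply, Unitary.coe_star, Matrix.star_eq_conjTranspose] at this
    exact this
  have key : ∀ a b : n → ℂ,
      (U * Matrix.diagonal a * Uᴴ) * (U * Matrix.diagonal b * Uᴴ)
        = U * Matrix.diagonal (fun i => a i * b i) * Uᴴ := by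
    intro a b
    simp only [Matrix.mul_assoc]
    rw [← Matrix.mul_assoc Uᴴ U, hU'U, one_mul, ← Matrix.mul_assoc (Matrix.diagonal a),
      Matrix.diagonal_mul_diagonal]
  have hfg : ∀ i, f i * g i = e i := by
    intro i
    by_cases h : d i = 0 <;> simp [hf, hg, he, h]
  have hgf : ∀ i, g i * f i = e i := fun i => by rw [mul_comm]; exact hfg i
  have hef : ∀ i, e i * f i = f i := by
    intro i
    by_cases h : d i = 0 <;> simp [hf, he, h]
  have hee : ∀ i, e i * e i = e i := by
    intro i
    by_cases h : d i = 0 <;> simp [he, h]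
  have hconjH : ∀ a : n → ℂ, (∀ i, star (a i) = a i) →
      (U * Matrix.diagonal a * Uᴴ)ᴴ = U * Matrix.diagonal a * Uᴴ := by
    intro a ha
    rw [Matrix.conjTranspose_mul, Matrix.conjTranspose_mul, Matrix.conjTranspose_conjTranspose,
      Matrix.diagonal_conjTranspose]
    have : star a = a := funext ha
    rw [this, Matrix.mul_assoc]
  refine ⟨U * Matrix.diagonal g * Uᴴ, U * Matrix.diagonal e * Uᴴ,
          hconjH _ (fun i => by simp [hg]), hconjH _ (fun i => by simp only [he]; split <;> simp),
          ?_, ?_, ?_, ?_, ?_⟩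
  · rw [spec, key, show (fun i => f i * g i) = e from funext hfg, Matrix.mul_assoc]
  · rw [spec, key, show (fun i => g i * f i) = e from funext hgf, Matrix.mul_assoc]
  · rw [spec, key, show (fun i => e i * f i) = f from funext hef, Matrix.mul_assoc]
  · rw [key, show (fun i => e i * e i) = e from funext hee, Matrix.mul_assoc]
  · have h2 : (1 : Matrix n n ℂ) - U * Matrix.diagonal e * Uᴴ
        = U * Matrix.diagonal (fun i => if d i = 0 then (1:ℂ) else 0) * Uᴴ := by
      have h1 : (1 : Matrix n n ℂ) = U * Matrix.diagonal (fun _ => (1:ℂ)) * Uᴴ := by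
        rw [show Matrix.diagonal (fun _ : n => (1:ℂ)) = 1 from Matrix.diagonal_one, mul_one, hUU]
      have h3 : (Matrix.diagonal (fun _ : n => (1:ℂ))) - Matrix.diagonal e
          = Matrix.diagonal (fun i => if d i = 0 then (1:ℂ) else 0) := by
        rw [Matrix.diagonal_sub]
        exact congrArg Matrix.diagonal
          (funext fun i => by by_cases h : d i = 0 <;> simp [he, h])
      rw [h1, ← Matrix.sub_mul, ← Matrix.mul_sub, h3, Matrix.mul_assoc]
    rw [h2]
    exact (Matrix.PosSemidef.diagonal (by
      intro i; dsimp only; split <;> simp)).mul_mul_conjTranspose_same U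

lemma psd_neg_eq_zero {n : Type*} [Fintype n] [DecidableEq n] {A : Matrix n n ℂ}
    (hA : A.PosSemidef) (hA' : (-A).PosSemidef) : A = 0 := by
  have h1 := hA.trace_nonneg
  have h2 := hA'.trace_nonneg
  rw [Matrix.trace_neg, neg_nonneg] at h2
  exact hA.trace_eq_zero_iff.mp (le_antisymm h2 h1)

lemma psd_sum_eq_zero {n : Type*} [Fintype n] [DecidableEq n] {N : ℕ}
    {X : Fin N → Matrix n n ℂ} (hX : ∀ k, (X k).PosSemidef)
    (hsum : ∑ k, X k = 0) (k : Fin N) : X k = 0 := by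
  apply psd_neg_eq_zero (hX k)
  have : -(X k) = ∑ j ∈ Finset.univ.erase k, X j := by
    have h2 := Finset.add_sum_erase Finset.univ X (Finset.mem_univ k)
    rw [hsum] at h2
    exact neg_eq_of_add_eq_zero_right h2
  rw [this]
  exact Finset.sum_induction _ _ (fun a b ha hb => ha.add hb) Matrix.PosSemidef.zero
    (fun j _ => hX j)

lemma douglas {n : Type*} [Fintype n] [DecidableEq n] {N : ℕ} {P : Matrix n n ℂ}
    (hP : P.PosSemidef) {R : Fin N → Matrix n n ℂ}
    (h : (P * P - ∑ k, R k * (R k)ᴴ).PosSemidef) :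
    ∃ S : Fin N → Matrix n n ℂ, (1 - ∑ k, S k * (S k)ᴴ).PosSemidef ∧ ∀ k, R k = P * S k := by
  obtain ⟨Pi, Q, hPiH, hQH, hPPi, hPiP, hQP, hQQ, h1Q⟩ := exists_pseudoInv hP
  have hJP : (1 - Q) * P = 0 := by rw [sub_mul, one_mul, hQP, sub_self]
  have hJH : (1 - Q)ᴴ = 1 - Q := by rw [Matrix.conjTranspose_sub, hQH, Matrix.conjTranspose_one]
  -- conjugating h by (1 - Q)
  have hconj := h.mul_mul_conjTranspose_same (1 - Q)
  rw [hJH] at hconj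
  have hzero : ∑ k, ((1 - Q) * R k) * ((1 - Q) * R k)ᴴ = 0 := by
    have hexp : (1 - Q) * (P * P - ∑ k, R k * (R k)ᴴ) * (1 - Q)
        = -(∑ k, ((1 - Q) * R k) * ((1 - Q) * R k)ᴴ) := by
      have hA : (1 - Q) * (P * P) = 0 := by rw [← Matrix.mul_assoc, hJP, Matrix.zero_mul]
      have e1 : (1 - Q) * (P * P - ∑ k, R k * (R k)ᴴ)
          = -((1 - Q) * ∑ k, R k * (R k)ᴴ) := by
        rw [Matrix.mul_sub, hA, zero_sub]
      rw [e1, Matrix.neg_mul]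
      congr 1
      rw [Finset.mul_sum, Finset.sum_mul]
      apply Finset.sum_congr rfl
      intro k _
      rw [Matrix.conjTranspose_mul, hJH]
      noncomm_ring
    rw [hexp] at hconj
    have hpos : (∑ k, ((1 - Q) * R k) * ((1 - Q) * R k)ᴴ).PosSemidef :=
      Finset.sum_induction _ _ (fun a b ha hb => ha.add hb) Matrix.PosSemidef.zero
        (fun j _ => Matrix.posSemidef_self_mul_conjTranspose _)
    exact psd_neg_eq_zero hpos hconj
  have hQR : ∀ k, Q * R k = R k := by
    intro k
    have := psd_sum_eq_zero (fun k => Matrix.posSemidef_self_mul_conjTranspose _) hzero k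
    have hx : (1 - Q) * R k = 0 := Matrix.self_mul_conjTranspose_eq_zero.mp this
    rw [Matrix.sub_mul, Matrix.one_mul] at hx
    exact (sub_eq_zero.mp hx).symm
  refine ⟨fun k => Pi * R k, ?_, fun k => by
    rw [← Matrix.mul_assoc, hPPi, hQR]⟩
  have hkey : 1 - ∑ k, (Pi * R k) * (Pi * R k)ᴴ
      = (1 - Q) + Pi * (P * P - ∑ k, R k * (R k)ᴴ) * Piᴴ := by
    have h1 : Pi * (P * P) * Piᴴ = Q := by
      rw [hPiH, ← Matrix.mul_assoc, hPiP, hQP, hPPi]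
    have h2 : Pi * (∑ k, R k * (R k)ᴴ) * Piᴴ = ∑ k, (Pi * R k) * (Pi * R k)ᴴ := by
      rw [Finset.mul_sum, Finset.sum_mul]
      apply Finset.sum_congr rfl
      intro k _
      rw [Matrix.conjTranspose_mul, hPiH]
      noncomm_ring
    rw [Matrix.mul_sub, Matrix.sub_mul, h1, h2]
    noncomm_ring
  rw [hkey]
  exact h1Q.add (h.mul_mul_conjTranspose_same Pi)


lemma psdSqrt_of_psd {m : ℕ} {A : Matrix (Fin m) (Fin m) ℂ} (h : A.PosSemidef) :
    psdSqrt A = h.sqrt := by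
  unfold psdSqrt
  exact dif_pos h

lemma prodD_succ {n N : ℕ} (Γ : Fin (N+1) → Matrix (Fin n) (Fin n) ℂ) (j : Fin N) :
    (((List.finRange (N+1)).take ((j.succ : Fin (N+1)) : ℕ)).map
        fun i => psdSqrt (1 - Γ i * (Γ i)ᴴ)).prod
      = psdSqrt (1 - Γ 0 * (Γ 0)ᴴ) *
        (((List.finRange N).take (j : ℕ)).map
          fun i => psdSqrt (1 - Γ i.succ * (Γ i.succ)ᴴ)).prod := by
  rw [List.finRange_succ, Fin.val_succ, List.take_succ_cons, List.map_cons, List.prod_cons]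
  congr 1
  rw [← List.map_take, List.map_map]
  rfl

section keyind
variable {n : ℕ}

lemma key_ind : ∀ (N : ℕ) (T : Fin N → Matrix (Fin n) (Fin n) ℂ),
    (1 - ∑ k, T k * (T k)ᴴ).PosSemidef ↔
    ∃ Γ : Fin N → Matrix (Fin n) (Fin n) ℂ,
      (∀ k, (1 - Γ k * (Γ k)ᴴ).PosSemidef) ∧
      ∀ k : Fin N, T k = (((List.finRange N).take (k : ℕ)).map
          fun j => psdSqrt (1 - Γ j * (Γ j)ᴴ)).prod * Γ k := by
  intro N
  induction N with
  | zero =>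
    intro T
    constructor
    · intro _
      exact ⟨fun k => k.elim0, fun k => k.elim0, fun k => k.elim0⟩
    · intro _
      simpa using Matrix.PosSemidef.one
  | succ N IH =>
    intro T
    constructor
    · intro h
      rw [Fin.sum_univ_succ] at h
      have hΓ0 : (1 - T 0 * (T 0)ᴴ).PosSemidef := by
        have heq : (1 : Matrix (Fin n) (Fin n) ℂ) - T 0 * (T 0)ᴴ
            = (1 - (T 0 * (T 0)ᴴ + ∑ k : Fin N, T k.succ * (T k.succ)ᴴ))
              + ∑ k : Fin N, T k.succ * (T k.succ)ᴴ := by abel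
        rw [heq]
        exact h.add (Finset.sum_induction _ _ (fun a b ha hb => ha.add hb)
          Matrix.PosSemidef.zero (fun j _ => Matrix.posSemidef_self_mul_conjTranspose _))
      set P := psdSqrt (1 - T 0 * (T 0)ᴴ) with hPdef
      have hPsd : P.PosSemidef := by rw [hPdef, psdSqrt_of_psd hΓ0]; exact hΓ0.posSemidef_sqrt
      have hPP : P * P = 1 - T 0 * (T 0)ᴴ := by
        rw [hPdef, psdSqrt_of_psd hΓ0]; exact hΓ0.sqrt_mul_self
      have h' : (P * P - ∑ k : Fin N, T k.succ * (T k.succ)ᴴ).PosSemidef := by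
        rw [hPP]
        have heq : (1 : Matrix (Fin n) (Fin n) ℂ) - T 0 * (T 0)ᴴ
              - ∑ k : Fin N, T k.succ * (T k.succ)ᴴ
            = 1 - (T 0 * (T 0)ᴴ + ∑ k : Fin N, T k.succ * (T k.succ)ᴴ) := by abel
        rw [heq]; exact h
      obtain ⟨S, hS, hRS⟩ := douglas hPsd h'
      obtain ⟨Γ', hΓ'c, hΓ'f⟩ := (IH S).mp hS
      set Γn : Fin (N+1) → Matrix (Fin n) (Fin n) ℂ := Fin.cons (T 0) Γ' with hΓn
      refine ⟨Γn, ?_, ?_⟩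
      · intro k
        refine Fin.cases ?_ ?_ k
        · rw [hΓn, Fin.cons_zero]; exact hΓ0
        · intro j; rw [hΓn, Fin.cons_succ]; exact hΓ'c j
      · intro k
        refine Fin.cases ?_ ?_ k
        · simp [hΓn]
        · intro j
          have hz : Γn 0 = T 0 := by rw [hΓn, Fin.cons_zero]
          have hsucc : ∀ i : Fin N, Γn i.succ = Γ' i := fun i => by rw [hΓn, Fin.cons_succ]
          rw [prodD_succ, hz, hsucc j]
          have : (fun i : Fin N => psdSqrt (1 - Γn i.succ * (Γn i.succ)ᴴ))
              = fun i : Fin N => psdSqrt (1 - Γ' i * (Γ' i)ᴴ) := by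
            funext i; rw [hsucc i]
          rw [this, hRS j, hΓ'f j, hPdef, Matrix.mul_assoc]
    · rintro ⟨Γ, hΓc, hΓf⟩
      set Γ' : Fin N → Matrix (Fin n) (Fin n) ℂ := fun k => Γ k.succ with hΓ'
      set S : Fin N → Matrix (Fin n) (Fin n) ℂ := fun k =>
        (((List.finRange N).take (k : ℕ)).map
          fun j => psdSqrt (1 - Γ' j * (Γ' j)ᴴ)).prod * Γ' k with hSdef
      have hS : (1 - ∑ k, S k * (S k)ᴴ).PosSemidef :=
        (IH S).mpr ⟨Γ', fun k => hΓc k.succ, fun k => rfl⟩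
      set P := psdSqrt (1 - Γ 0 * (Γ 0)ᴴ) with hPdef
      have hPsd : P.PosSemidef := by
        rw [hPdef, psdSqrt_of_psd (hΓc 0)]; exact (hΓc 0).posSemidef_sqrt
      have hPP : P * P = 1 - Γ 0 * (Γ 0)ᴴ := by
        rw [hPdef, psdSqrt_of_psd (hΓc 0)]; exact (hΓc 0).sqrt_mul_self
      have hT0 : T 0 = Γ 0 := by simpa using hΓf 0
      have hTsucc : ∀ k : Fin N, T k.succ = P * S k := by
        intro k
        rw [hΓf k.succ, prodD_succ, Matrix.mul_assoc, hSdef]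
      rw [Fin.sum_univ_succ]
      have hsum : ∑ k : Fin N, T k.succ * (T k.succ)ᴴ
          = P * (∑ k, S k * (S k)ᴴ) * Pᴴ := by
        rw [Finset.mul_sum, Finset.sum_mul]
        apply Finset.sum_congr rfl
        intro k _
        rw [hTsucc k, Matrix.conjTranspose_mul]
        noncomm_ring
      have heq : (1 : Matrix (Fin n) (Fin n) ℂ)
          - (T 0 * (T 0)ᴴ + ∑ k : Fin N, T k.succ * (T k.succ)ᴴ)
          = P * (1 - ∑ k, S k * (S k)ᴴ) * Pᴴ := by
        rw [hsum, hT0, Matrix.mul_sub, Matrix.sub_mul, Matrix.mul_one, hPsd.1, hPP]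
        abel
      rw [heq]
      exact hS.mul_mul_conjTranspose_same P
end keyind

end Aux

/-- **Structure of a general row contraction.** The row block matrix `T = [T₁ T₂ ⋯ T_N]`
(realized as a matrix indexed by `Fin n × (Fin N × Fin n)`, with `(i, (k, j))` entry the
`(i, j)` entry of the `k`-th block) has operator norm at most 1 if and only if there exist
contractions `Γ₁, …, Γ_N` such that `T₁ = Γ₁` and, for `k ≥ 2`,
`T_k = D_{Γ₁ᴴ}·D_{Γ₂ᴴ} ⋯ D_{Γ_{k−1}ᴴ}·Γ_k`, where `D_{Γⱼᴴ} = (I − ΓⱼΓⱼᴴ)^{1/2}` and the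
product is taken in the indicated order. -/
theorem rowContraction_iff_exists_contractions_general
    {n N : ℕ} (hN : 0 < N) (T : Fin N → Matrix (Fin n) (Fin n) ℂ) :
    ‖(Matrix.of fun i (p : Fin N × Fin n) => T p.1 i p.2 :
        Matrix (Fin n) (Fin N × Fin n) ℂ)‖ ≤ 1 ↔
      ∃ Γ : Fin N → Matrix (Fin n) (Fin n) ℂ,
        (∀ k, ‖Γ k‖ ≤ 1) ∧
        T ⟨0, hN⟩ = Γ ⟨0, hN⟩ ∧
        ∀ k : Fin N, 1 ≤ (k : ℕ) →
          T k = (((List.finRange N).take (k : ℕ)).map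
                    fun j => psdSqrt (1 - Γ j * (Γ j)ᴴ)).prod * Γ k := by
  have hrow : (Matrix.of fun i (p : Fin N × Fin n) => T p.1 i p.2 :
      Matrix (Fin n) (Fin N × Fin n) ℂ) *
      (Matrix.of fun i (p : Fin N × Fin n) => T p.1 i p.2 :
      Matrix (Fin n) (Fin N × Fin n) ℂ)ᴴ = ∑ k, T k * (T k)ᴴ := by
    ext i j
    simp only [Matrix.mul_apply, Matrix.conjTranspose_apply, Matrix.of_apply, Matrix.sum_apply,
      Fintype.sum_prod_type]
  rw [norm_le_one_iff_psd, hrow, key_ind]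
  constructor
  · rintro ⟨Γ, hc, hf⟩
    refine ⟨Γ, fun k => ?_, ?_, fun k _ => hf k⟩
    · rw [norm_le_one_iff_psd]; exact hc k
    · simpa using hf ⟨0, hN⟩
  · rintro ⟨Γ, hc, h0, hf⟩
    refine ⟨Γ, fun k => (norm_le_one_iff_psd _).mp (hc k), fun k => ?_⟩
    by_cases hk : 1 ≤ (k : ℕ)
    · exact hf k hk
    · have hk0 : k = ⟨0, hN⟩ := Fin.ext (by simp only [Fin.val_mk]; omega)
      rw [hk0]
      simpa using h0
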